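/- Let n ≥ 1 and k ≥ 3 be integers. The tangent cone at the origin of the Brieskorn hypersurface X_k^n = {(z,w) ∈ ℂⁿ×ℂ : z₁²+⋯+zₙ² = w^k} equals {(z,w) ∈ ℂⁿ×ℂ : z₁²+⋯+zₙ² = 0}; in particular the w-axis {z = 0} is contained in the tangent cone of X_k^n at the origin. -/

import Mathlib

open Filter Topology

/-- Every monic quadratic `s^2 + 2Bs - C` has a root of norm at most `√‖C‖`. -/
private lemma exists_small_root (B C : ℂ) :
    ∃ s : ℂ, s ^ 2 + 2 * B * s = C ∧ ‖s‖ ^ 2 ≤ ‖C‖ := by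
  set σ : ℂ := (B ^ 2 + C) ^ (((2 : ℕ) : ℂ)⁻¹) with hσdef
  have hσ : σ ^ 2 = B ^ 2 + C := Complex.cpow_nat_inv_pow (B ^ 2 + C) two_ne_zero
  have hroot1 : (-B + σ) ^ 2 + 2 * B * (-B + σ) = C := by linear_combination hσ
  have hroot2 : (-B - σ) ^ 2 + 2 * B * (-B - σ) = C := by linear_combination hσ
  have hprod : ‖-B + σ‖ * ‖-B - σ‖ = ‖C‖ := by
    rw [← norm_mul, show (-B + σ) * (-B - σ) = -C by linear_combination -hσ, norm_neg]
  by_cases hle : ‖-B + σ‖ ≤ ‖-B - σ‖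
  · refine ⟨-B + σ, hroot1, ?_⟩
    calc ‖-B + σ‖ ^ 2 = ‖-B + σ‖ * ‖-B + σ‖ := sq ‖-B + σ‖
      _ ≤ ‖-B + σ‖ * ‖-B - σ‖ := by gcongr
      _ = ‖C‖ := hprod
  · refine ⟨-B - σ, hroot2, ?_⟩
    push_neg at hle
    calc ‖-B - σ‖ ^ 2 = ‖-B - σ‖ * ‖-B - σ‖ := sq ‖-B - σ‖
      _ ≤ ‖-B + σ‖ * ‖-B - σ‖ := by gcongr
      _ = ‖C‖ := hprod

private lemma mem_cone (n k : ℕ) (hn : 1 ≤ n) (hk : 3 ≤ k)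
    (p : EuclideanSpace ℂ (Fin n) × ℂ) (hp : ∑ i, p.1 i ^ 2 = 0) :
    p ∈ tangentConeAt ℝ {q : EuclideanSpace ℂ (Fin n) × ℂ | ∑ i, q.1 i ^ 2 = q.2 ^ k} 0 := by
  set i0 : Fin n := ⟨0, hn⟩ with hi0
  set e0 : EuclideanSpace ℂ (Fin n) := EuclideanSpace.single i0 (1 : ℂ) with he0
  set t : ℕ → ℝ := fun m => 1 / ((m : ℝ) + 1) with ht
  have htpos : ∀ m : ℕ, 0 < t m := fun m => by positivity
  have hmne : ∀ m : ℕ, ((m : ℝ) + 1) ≠ 0 := fun m => by positivity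
  have H : ∀ m : ℕ, ∃ s : ℂ,
      s ^ 2 + 2 * (((t m : ℝ) : ℂ) * p.1 i0) * s = (((t m : ℝ) : ℂ) * p.2) ^ k ∧
      ‖s‖ ^ 2 ≤ ‖(((t m : ℝ) : ℂ) * p.2) ^ k‖ :=
    fun m => exists_small_root _ _
  choose s hs hsb using H
  refine mem_tangentConeAt_iff_exists_seq_norm_tendsto_atTop.mpr ⟨fun m => (m : ℝ) + 1,
    fun m => (t m • p.1 + s m • e0, t m • p.2), ?_, ?_, ?_⟩
  swap
  · -- membership
    refine Eventually.of_forall fun m => ?_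
    simp only [zero_add, Set.mem_setOf_eq]
    have hev : ∀ i, (t m • p.1 + s m • e0) i = ((t m : ℝ) : ℂ) * p.1 i + s m * e0 i := by
      intro i
      simp [PiLp.add_apply, PiLp.smul_apply, Complex.real_smul, smul_eq_mul]
    have hexp : ∀ i, (((t m : ℝ) : ℂ) * p.1 i + s m * e0 i) ^ 2 =
        ((t m : ℝ) : ℂ) ^ 2 * p.1 i ^ 2 +
          (2 * ((t m : ℝ) : ℂ) * s m * p.1 i + s m ^ 2) * e0 i := by
      intro i
      by_cases h : i = i0 <;> simp [he0, EuclideanSpace.single_apply, h] <;> ring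
    calc ∑ i, ((t m • p.1 + s m • e0) i) ^ 2
        = ∑ i, (((t m : ℝ) : ℂ) ^ 2 * p.1 i ^ 2 +
            (2 * ((t m : ℝ) : ℂ) * s m * p.1 i + s m ^ 2) * e0 i) := by
          refine Finset.sum_congr rfl fun i _ => ?_; rw [hev i, hexp i]
      _ = ((t m : ℝ) : ℂ) ^ 2 * ∑ i, p.1 i ^ 2 +
            ∑ i, (2 * ((t m : ℝ) : ℂ) * s m * p.1 i + s m ^ 2) * e0 i := by
          rw [Finset.sum_add_distrib, Finset.mul_sum]
      _ = ∑ i, (if i = i0 then 2 * ((t m : ℝ) : ℂ) * s m * p.1 i + s m ^ 2 else 0) := by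
          rw [hp, mul_zero, zero_add]
          refine Finset.sum_congr rfl fun i _ => ?_
          by_cases h : i = i0 <;> simp [he0, EuclideanSpace.single_apply, h]
      _ = 2 * ((t m : ℝ) : ℂ) * s m * p.1 i0 + s m ^ 2 := by
          rw [Finset.sum_ite_eq' Finset.univ i0]
          simp
      _ = (((t m : ℝ) : ℂ) * p.2) ^ k := by
          rw [← hs m]; ring
      _ = (t m • p.2) ^ k := by rw [Complex.real_smul]
  · -- norms tend to infinity
    have h : Tendsto (fun m : ℕ => (m : ℝ) + 1) atTop atTop :=
      tendsto_atTop_add_const_right _ 1 tendsto_natCast_atTop_atTop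
    exact h.congr fun m => (Real.norm_of_nonneg (by positivity)).symm
  · -- c • d tends to p
    have key : ∀ m : ℕ, (((m : ℝ) + 1)) • ((t m • p.1 + s m • e0, t m • p.2) :
        EuclideanSpace ℂ (Fin n) × ℂ) =
        (p.1 + ((((m : ℝ) + 1 : ℝ) : ℂ) * s m) • e0, p.2) := by
      intro m
      have hone : ((m : ℝ) + 1) * t m = 1 := by
        rw [ht]; field_simp
      have h1 : ((m : ℝ) + 1) • (t m • p.1) = p.1 := by
        rw [smul_smul, hone, one_smul]
      have h2 : ((m : ℝ) + 1) • (t m • p.2) = p.2 := by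
        rw [smul_smul, hone, one_smul]
      have h3 : ((m : ℝ) + 1) • (s m • e0) = ((((m : ℝ) + 1 : ℝ) : ℂ) * s m) • e0 := by
        rw [← Complex.coe_smul, smul_smul]
      rw [Prod.smul_mk, smul_add, h1, h2, h3]
    have hu : Tendsto (fun m : ℕ => (((m : ℝ) + 1 : ℝ) : ℂ) * s m) atTop (𝓝 0) := by
      rw [tendsto_zero_iff_norm_tendsto_zero]
      have hb : ∀ m : ℕ, ‖(((m : ℝ) + 1 : ℝ) : ℂ) * s m‖ ^ 2 ≤ (1 / ((m : ℝ) + 1)) * ‖p.2‖ ^ k := by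
        intro m
        have h1 : ‖(((m : ℝ) + 1 : ℝ) : ℂ) * s m‖ ^ 2 = ((m : ℝ) + 1) ^ 2 * ‖s m‖ ^ 2 := by
          rw [norm_mul, Complex.norm_real, Real.norm_of_nonneg (by positivity), mul_pow]
        have h2 : ‖(((t m : ℝ) : ℂ) * p.2) ^ k‖ = (t m) ^ k * ‖p.2‖ ^ k := by
          rw [norm_pow, norm_mul, Complex.norm_real, Real.norm_of_nonneg (htpos m).le, mul_pow]
        have h3 : ((m : ℝ) + 1) ^ 2 * (t m) ^ k ≤ 1 / ((m : ℝ) + 1) := by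
          rw [ht]
          simp only [one_div, inv_pow]
          rw [mul_inv_le_iff₀ (by positivity), inv_mul_eq_div, le_div_iff₀ (by positivity)]
          calc ((m : ℝ) + 1) ^ 2 * ((m : ℝ) + 1) = ((m : ℝ) + 1) ^ 3 := by ring
            _ ≤ ((m : ℝ) + 1) ^ k := by
                refine pow_le_pow_right₀ (by linarith [Nat.cast_nonneg (α := ℝ) m]) hk
        calc ‖(((m : ℝ) + 1 : ℝ) : ℂ) * s m‖ ^ 2
            = ((m : ℝ) + 1) ^ 2 * ‖s m‖ ^ 2 := h1
          _ ≤ ((m : ℝ) + 1) ^ 2 * ((t m) ^ k * ‖p.2‖ ^ k) := by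
              refine mul_le_mul_of_nonneg_left ?_ (by positivity)
              rw [← h2]; exact hsb m
          _ = (((m : ℝ) + 1) ^ 2 * (t m) ^ k) * ‖p.2‖ ^ k := by ring
          _ ≤ (1 / ((m : ℝ) + 1)) * ‖p.2‖ ^ k := by
              refine mul_le_mul_of_nonneg_right h3 (by positivity)
      have hsq : Tendsto (fun m : ℕ => ‖(((m : ℝ) + 1 : ℝ) : ℂ) * s m‖ ^ 2) atTop (𝓝 0) := by
        refine squeeze_zero (fun m => by positivity) hb ?_
        have := tendsto_one_div_add_atTop_nhds_zero_nat.mul_const (‖p.2‖ ^ k)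
        simpa using this
      have := (Real.continuous_sqrt.tendsto 0).comp hsq
      simp only [Function.comp_def, Real.sqrt_zero] at this
      refine this.congr fun m => ?_
      rw [Real.sqrt_sq (norm_nonneg _)]
    have hfst : Tendsto (fun m : ℕ => p.1 + ((((m : ℝ) + 1 : ℝ) : ℂ) * s m) • e0) atTop (𝓝 p.1) := by
      have h := (tendsto_const_nhds : Tendsto (fun _ : ℕ => p.1) atTop (𝓝 p.1)).add
        (hu.smul_const e0)
      simpa using h
    have : Tendsto (fun m : ℕ => ((p.1 + ((((m : ℝ) + 1 : ℝ) : ℂ) * s m) • e0, p.2) :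
        EuclideanSpace ℂ (Fin n) × ℂ)) atTop (𝓝 (p.1, p.2)) :=
      hfst.prodMk_nhds tendsto_const_nhds
    refine Tendsto.congr (fun m => (key m).symm) ?_
    simpa using this

/-- For `k ≥ 3`, the tangent cone at the origin of the Brieskorn hypersurface
`X_k^n = {(z,w) : z₁²+⋯+zₙ² = w^k}` equals `{(z,w) : z₁²+⋯+zₙ² = 0}`; in particular the
`w`-axis `{z = 0}` is contained in the tangent cone. -/
theorem stmt_14 (n k : ℕ) (hn : 1 ≤ n) (hk : 3 ≤ k) :
    tangentConeAt ℝ {p : EuclideanSpace ℂ (Fin n) × ℂ | ∑ i, p.1 i ^ 2 = p.2 ^ k} 0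
        = {p : EuclideanSpace ℂ (Fin n) × ℂ | ∑ i, p.1 i ^ 2 = 0} ∧
      {p : EuclideanSpace ℂ (Fin n) × ℂ | p.1 = 0} ⊆
        tangentConeAt ℝ {p : EuclideanSpace ℂ (Fin n) × ℂ | ∑ i, p.1 i ^ 2 = p.2 ^ k} 0 := by
  have main : tangentConeAt ℝ {p : EuclideanSpace ℂ (Fin n) × ℂ | ∑ i, p.1 i ^ 2 = p.2 ^ k} 0
      = {p : EuclideanSpace ℂ (Fin n) × ℂ | ∑ i, p.1 i ^ 2 = 0} := by
    ext p
    constructor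
    · intro hp
      obtain ⟨c, d, hc, hmem, hlim⟩ := mem_tangentConeAt_iff_exists_seq_norm_tendsto_atTop.mp hp
      simp only [Set.mem_setOf_eq]
      have hd : Tendsto d atTop (𝓝 0) := tangentConeAt.lim_zero atTop hc hlim
      have hd2 : Tendsto (fun m => (d m).2) atTop (𝓝 0) := by
        have := (continuous_snd.tendsto (0 : EuclideanSpace ℂ (Fin n) × ℂ)).comp hd
        simpa [Function.comp_def] using this
      have hc2 : Tendsto (fun m => (c m • d m).2) atTop (𝓝 p.2) :=
        (continuous_snd.tendsto p).comp hlim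
      have L1 : Tendsto (fun m => ∑ i, ((c m • d m).1 i) ^ 2) atTop (𝓝 (∑ i, p.1 i ^ 2)) := by
        have hcont : Continuous fun q : EuclideanSpace ℂ (Fin n) × ℂ => ∑ i, q.1 i ^ 2 :=
          continuous_finset_sum _ fun i _ =>
            ((EuclideanSpace.proj i).continuous.comp continuous_fst).pow 2
        exact (hcont.tendsto p).comp hlim
      have L3 : Tendsto (fun m => ((c m • d m).2) ^ 2 * ((d m).2) ^ (k - 2)) atTop (𝓝 0) := by
        have := (hc2.pow 2).mul (hd2.pow (k - 2))
        simpa [zero_pow (show k - 2 ≠ 0 by omega)] using this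
      have L2 : (fun m => ∑ i, ((c m • d m).1 i) ^ 2) =ᶠ[atTop]
          (fun m => ((c m • d m).2) ^ 2 * ((d m).2) ^ (k - 2)) := by
        filter_upwards [hmem] with m hm
        simp only [zero_add, Set.mem_setOf_eq] at hm
        have hev : ∀ i, ((c m • d m).1 i) = ((c m : ℝ) : ℂ) * (d m).1 i := by
          intro i
          simp [Prod.smul_fst, PiLp.smul_apply, Complex.real_smul, smul_eq_mul]
        have h2 : (c m • d m).2 = ((c m : ℝ) : ℂ) * (d m).2 := by
          simp [Prod.smul_snd, Complex.real_smul]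
        calc ∑ i, ((c m • d m).1 i) ^ 2
            = ∑ i, ((c m : ℝ) : ℂ) ^ 2 * ((d m).1 i) ^ 2 := by
              refine Finset.sum_congr rfl fun i _ => ?_; rw [hev i]; ring
          _ = ((c m : ℝ) : ℂ) ^ 2 * ∑ i, ((d m).1 i) ^ 2 := by rw [Finset.mul_sum]
          _ = ((c m : ℝ) : ℂ) ^ 2 * ((d m).2) ^ k := by rw [hm]
          _ = ((c m • d m).2) ^ 2 * ((d m).2) ^ (k - 2) := by
              rw [h2, mul_pow, mul_assoc, ← pow_add]
              congr 2
              omega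
      exact tendsto_nhds_unique L1 (L3.congr' L2.symm)
    · intro hp
      exact mem_cone n k hn hk p hp
  refine ⟨main, fun p hp => ?_⟩
  rw [main]
  simp only [Set.mem_setOf_eq] at hp ⊢
  rw [hp]
  simp
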